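/- Let M be a maniplex with symmetry type graph T. Then M is i-face-transitive (Aut(M) acts transitively on the i-faces of M) if and only if the subgraph T^i of T obtained by deleting all edges and semi-edges of colour i is connected. -/

import Mathlib

/-- A maniplex of rank `n-1`, given by its flag graph: a connected, properly
`n`-edge-coloured graph on the flag set `F`, encoded by fixed-point-free
involutions `r c` (one for each colour), with the commuting 4-cycle condition
for colours differing by at least 2. -/
structure Maniplex (n : ℕ) (F : Type) where
  r : Fin n → Equiv.Perm F
  invol : ∀ c, r c * r c = 1
  fixfree : ∀ c v, r c v ≠ v
  comm : ∀ i j : Fin n, (i : ℕ) + 2 ≤ (j : ℕ) → r i * r j = r j * r i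
  alt4 : ∀ i j : Fin n, (i : ℕ) + 2 ≤ (j : ℕ) → ∀ v, r i v ≠ r j v
  conn : ∀ u v : F, ∃ g ∈ Subgroup.closure (Set.range r), g u = v

/-- The automorphism group of a maniplex: colour-preserving automorphisms of
the flag graph, i.e. permutations commuting with every connection generator. -/
def Maniplex.Aut {n : ℕ} {F : Type} (M : Maniplex n F) : Subgroup (Equiv.Perm F) :=
  Subgroup.centralizer (Set.range M.r)

/-- `M` is `i`-face-transitive: `Aut M` is transitive on the `i`-faces of `M`,
where the `i`-face of a flag `Φ` is the connected component of `Φ` in the flag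
graph with the `i`-coloured edges deleted, i.e. the orbit of `Φ` under the
subgroup generated by the connection generators of colours `≠ i`. -/
def Maniplex.faceTransitive {n : ℕ} {F : Type} (M : Maniplex n F) (i : Fin n) : Prop :=
  ∀ Φ Ψ : F, ∃ g ∈ M.Aut,
    (g : Equiv.Perm F) ''
        MulAction.orbit (Subgroup.closure (M.r '' {c : Fin n | c ≠ i})) Φ =
      MulAction.orbit (Subgroup.closure (M.r '' {c : Fin n | c ≠ i})) Ψ

/-- `T^i` is connected: any two vertices of the symmetry type graph (flag
orbits) are joined by a walk avoiding colour `i`. -/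
def Maniplex.delConn {n : ℕ} {F : Type} (M : Maniplex n F) (i : Fin n) : Prop :=
  ∀ Φ Ψ : F, ∃ h ∈ Subgroup.closure (M.r '' {c : Fin n | c ≠ i}),
    (h : Equiv.Perm F) Φ ∈ MulAction.orbit M.Aut Ψ

/-- A maniplex `M` is `i`-face-transitive if and only if the subgraph `T^i` of
its symmetry type graph obtained by deleting all edges and semi-edges of colour
`i` is connected. -/
theorem stmt4 (n : ℕ) (F : Type) (M : Maniplex n F) (i : Fin n) :
    M.faceTransitive i ↔ M.delConn i := by
  set S : Set (Equiv.Perm F) := M.r '' {c : Fin n | c ≠ i} with hS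
  -- automorphisms commute with every element of the subgroup generated by S
  have hcomm : ∀ g ∈ M.Aut, ∀ h ∈ Subgroup.closure S, g * h = h * g := by
    intro g hg h hh
    have hle : Subgroup.closure S ≤ Subgroup.centralizer {g} := by
      rw [Subgroup.closure_le]
      rintro x ⟨c, -, rfl⟩
      rw [SetLike.mem_coe, Subgroup.mem_centralizer_iff]
      rintro y (rfl : y = g)
      exact (hg (M.r c) ⟨c, rfl⟩).symm
    have := hle hh
    rw [Subgroup.mem_centralizer_iff] at this
    exact this g rfl
  -- automorphisms map H-orbits to H-orbits
  have himage : ∀ g ∈ M.Aut, ∀ x : F,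
      (g : Equiv.Perm F) '' MulAction.orbit (Subgroup.closure S) x
        = MulAction.orbit (Subgroup.closure S) (g x) := by
    intro g hg x
    ext y
    constructor
    · rintro ⟨z, ⟨k, rfl⟩, rfl⟩
      refine ⟨k, ?_⟩
      show (k : Equiv.Perm F) (g x) = g ((k : Equiv.Perm F) x)
      have hc : g * (k : Equiv.Perm F) = (k : Equiv.Perm F) * g := hcomm g hg _ k.2
      calc (k : Equiv.Perm F) (g x) = ((k : Equiv.Perm F) * g) x := rfl
        _ = (g * (k : Equiv.Perm F)) x := by rw [hc]
        _ = g ((k : Equiv.Perm F) x) := rfl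
    · rintro ⟨k, rfl⟩
      refine ⟨(k : Equiv.Perm F) x, ⟨k, rfl⟩, ?_⟩
      show g ((k : Equiv.Perm F) x) = (k : Equiv.Perm F) (g x)
      have hc : g * (k : Equiv.Perm F) = (k : Equiv.Perm F) * g := hcomm g hg _ k.2
      calc g ((k : Equiv.Perm F) x) = (g * (k : Equiv.Perm F)) x := rfl
        _ = ((k : Equiv.Perm F) * g) x := by rw [hc]
        _ = (k : Equiv.Perm F) (g x) := rfl
  constructor
  · intro hft Φ Ψ
    obtain ⟨g, hg, himg⟩ := hft Φ Ψ
    have hmem : g Φ ∈ MulAction.orbit (Subgroup.closure S) Ψ := by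
      rw [← himg]
      exact ⟨Φ, MulAction.mem_orbit_self Φ, rfl⟩
    obtain ⟨h, hh⟩ := hmem
    have hh' : (h : Equiv.Perm F) Ψ = g Φ := hh
    refine ⟨(h : Equiv.Perm F)⁻¹, inv_mem h.2, ⟨⟨g⁻¹, inv_mem hg⟩, ?_⟩⟩
    have hc : g⁻¹ * (h : Equiv.Perm F) = (h : Equiv.Perm F) * g⁻¹ :=
      hcomm g⁻¹ (inv_mem hg) _ h.2
    show g⁻¹ Ψ = (h : Equiv.Perm F)⁻¹ Φ
    have hΦ : Φ = (h : Equiv.Perm F) (g⁻¹ Ψ) := by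
      calc Φ = g⁻¹ (g Φ) := (Equiv.symm_apply_apply g Φ).symm
        _ = g⁻¹ ((h : Equiv.Perm F) Ψ) := by rw [hh']
        _ = (g⁻¹ * (h : Equiv.Perm F)) Ψ := rfl
        _ = ((h : Equiv.Perm F) * g⁻¹) Ψ := by rw [hc]
        _ = (h : Equiv.Perm F) (g⁻¹ Ψ) := rfl
    rw [hΦ]; exact (Equiv.symm_apply_apply _ _).symm
  · intro hd Φ Ψ
    obtain ⟨h, hhmem, a, ha⟩ := hd Φ Ψ
    have ha' : (a : Equiv.Perm F) Ψ = (h : Equiv.Perm F) Φ := ha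
    refine ⟨(a : Equiv.Perm F)⁻¹, inv_mem a.2, ?_⟩
    have hkey : (a : Equiv.Perm F)⁻¹ Φ ∈ MulAction.orbit (Subgroup.closure S) Ψ := by
      refine ⟨⟨(h : Equiv.Perm F)⁻¹, inv_mem hhmem⟩, ?_⟩
      show (h : Equiv.Perm F)⁻¹ Ψ = (a : Equiv.Perm F)⁻¹ Φ
      have hc : (a : Equiv.Perm F)⁻¹ * (h : Equiv.Perm F)
          = (h : Equiv.Perm F) * (a : Equiv.Perm F)⁻¹ :=
        hcomm _ (inv_mem a.2) _ hhmem
      have hΨ : Ψ = (h : Equiv.Perm F) ((a : Equiv.Perm F)⁻¹ Φ) := by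
        calc Ψ = (a : Equiv.Perm F)⁻¹ ((a : Equiv.Perm F) Ψ) :=
              (Equiv.symm_apply_apply _ Ψ).symm
          _ = (a : Equiv.Perm F)⁻¹ ((h : Equiv.Perm F) Φ) := by rw [ha']
          _ = ((a : Equiv.Perm F)⁻¹ * (h : Equiv.Perm F)) Φ := rfl
          _ = ((h : Equiv.Perm F) * (a : Equiv.Perm F)⁻¹) Φ := by rw [hc]
          _ = (h : Equiv.Perm F) ((a : Equiv.Perm F)⁻¹ Φ) := rfl
      rw [hΨ]; exact Equiv.symm_apply_apply _ _
    rw [himage _ (inv_mem a.2) Φ]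
    exact MulAction.orbit_eq_iff.mpr hkey
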